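/- Let R be a ring, G_1,…,G_s finite groups, a_1,…,a_s ∈ R, and for each group B fix a subgroup ω(B) ≤ Aut(B). If for every finite group A one has Σ_i a_i·|FRep_ω(A, G_i)| = 0 (where FRep_ω(A,G_i) is the set of ω(G_i)-orbits on Mono(A,G_i)), then for every finite group A one also has Σ_i a_i·|Rep_ω(A, G_i)| = 0, where Rep_ω(A,G_i) is the set of ω(G_i)-orbits on Hom(A,G_i). -/

import Mathlib

/-- The `ω`-orbit equivalence (post-composition by automorphisms in `ω`)
on `Hom(A,B)`. -/
def repSetoid (A B : Type*) [Group A] [Group B] (ω : Subgroup (MulAut B)) :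
    Setoid (A →* B) where
  r f g := ∃ θ ∈ ω, (θ : MulAut B).toMonoidHom.comp f = g
  iseqv := by
    refine ⟨fun f => ⟨1, one_mem ω, by ext a; simp⟩, ?_, ?_⟩
    · rintro f g ⟨θ, hθ, rfl⟩
      exact ⟨θ⁻¹, inv_mem hθ, by ext a; simp⟩
    · rintro f g h ⟨θ, hθ, rfl⟩ ⟨σ, hσ, rfl⟩
      exact ⟨σ * θ, mul_mem hσ hθ, by ext a; simp⟩

/-- The `ω`-orbit equivalence (post-composition by automorphisms in `ω`)
on `Mono(C,B)`. -/
def frepSetoid (C B : Type*) [Group C] [Group B] (ω : Subgroup (MulAut B)) :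
    Setoid {g : C →* B // Function.Injective g} where
  r f g := ∃ θ ∈ ω, (θ : MulAut B).toMonoidHom.comp f.1 = g.1
  iseqv := by
    refine ⟨fun f => ⟨1, one_mem ω, by ext a; simp⟩, ?_, ?_⟩
    · rintro ⟨f, hf⟩ ⟨g, hg⟩ ⟨θ, hθ, h⟩
      exact ⟨θ⁻¹, inv_mem hθ, by rw [← h]; ext a; simp⟩
    · rintro ⟨f, hf⟩ ⟨g, hg⟩ ⟨k, hk⟩ ⟨θ, hθ, h⟩ ⟨σ, hσ, h'⟩
      exact ⟨σ * θ, mul_mem hσ hθ, by rw [← h', ← h]; ext a; simp⟩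


section
variable {A B : Type*} [Group A] [Group B] (ω : Subgroup (MulAut B))

-- finiteness of MonoidHom
lemma finite_monoidHom [Finite A] [Finite B] : Finite (A →* B) :=
  Finite.of_injective (fun f => (f : A → B)) DFunLike.coe_injective

-- kernel is invariant under the orbit relation, descends to quotient
def kerFun : Quotient (repSetoid A B ω) → {N : Subgroup A // N.Normal} :=
  Quotient.lift (fun f => ⟨f.ker, f.normal_ker⟩) (by
    rintro f g ⟨θ, hθ, rfl⟩
    refine Subtype.ext ?_
    ext x
    simp [MonoidHom.mem_ker, map_eq_one_iff _ (θ : MulAut B).injective])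
end
section
variable {A B : Type*} [Group A] [Group B] (ω : Subgroup (MulAut B))

/-- forward map on representatives -/
def toRep (N : Subgroup A) [N.Normal] :
    Quotient (frepSetoid (A ⧸ N) B ω) → {q : Quotient (repSetoid A B ω) // kerFun ω q = ⟨N, inferInstance⟩} :=
  Quotient.lift
    (fun g => ⟨Quotient.mk (repSetoid A B ω) ((g : (A ⧸ N) →* B).comp (QuotientGroup.mk' N)),
      by
        refine Subtype.ext ?_
        show ((g : (A ⧸ N) →* B).comp (QuotientGroup.mk' N)).ker = N
        ext x
        simp [MonoidHom.mem_ker, map_eq_one_iff _ g.2, QuotientGroup.eq_one_iff]⟩)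
    (by
      rintro ⟨g, hg⟩ ⟨g', hg'⟩ ⟨θ, hθ, hc⟩
      refine Subtype.ext (Quotient.sound ⟨θ, hθ, ?_⟩)
      rw [← MonoidHom.comp_assoc]
      exact congrArg (fun k => MonoidHom.comp k (QuotientGroup.mk' N)) hc)

lemma toRep_bijective (N : Subgroup A) [hN : N.Normal] :
    Function.Bijective (toRep ω N) := by
  constructor
  · rintro ⟨g⟩ ⟨g'⟩ hEq
    obtain ⟨θ, hθ, hc⟩ := Quotient.exact (congrArg Subtype.val hEq)
    refine Quotient.sound ⟨θ, hθ, ?_⟩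
    rw [← MonoidHom.comp_assoc] at hc
    exact (MonoidHom.cancel_right (QuotientGroup.mk'_surjective N)).mp hc
  · rintro ⟨q, hq⟩
    obtain ⟨f, rfl⟩ := Quotient.exists_rep q
    have hker : f.ker = N := congrArg Subtype.val hq
    subst hker
    refine ⟨Quotient.mk _ ⟨QuotientGroup.kerLift f, QuotientGroup.kerLift_injective f⟩, ?_⟩
    refine Subtype.ext ?_
    show Quotient.mk (repSetoid A B ω) ((QuotientGroup.kerLift f).comp (QuotientGroup.mk' f.ker)) = Quotient.mk (repSetoid A B ω) f
    exact congrArg _ (MonoidHom.ext fun a => QuotientGroup.kerLift_mk f a)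
end
section
variable (A B : Type*) [Group A] [Group B] (ω : Subgroup (MulAut B))

/-- `|FRep_ω(A⧸N, B)|` packaged with the normality proof. -/
noncomputable def frepCard (N : Subgroup A) (hN : N.Normal) : ℕ :=
  haveI := hN
  Nat.card (Quotient (frepSetoid (A ⧸ N) B ω))

lemma card_rep [Finite A] [Finite B] [Fintype {N : Subgroup A // N.Normal}] :
    Nat.card (Quotient (repSetoid A B ω)) =
      ∑ N : {N : Subgroup A // N.Normal}, frepCard A B ω N.1 N.2 := by
  haveI : Finite (A →* B) := finite_monoidHom
  have e : (Σ N : {N : Subgroup A // N.Normal},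
      {q : Quotient (repSetoid A B ω) // kerFun ω q = N}) ≃ Quotient (repSetoid A B ω) :=
    Equiv.sigmaFiberEquiv (kerFun ω)
  rw [← Nat.card_congr e]
  haveI : ∀ N : {N : Subgroup A // N.Normal},
      Fintype {q : Quotient (repSetoid A B ω) // kerFun ω q = N} := fun N => Fintype.ofFinite _
  rw [Nat.card_eq_fintype_card, Fintype.card_sigma]
  refine Finset.sum_congr rfl fun N _ => ?_
  haveI := N.2
  have hb := toRep_bijective (A := A) (B := B) ω N.1
  have : frepCard A B ω N.1 N.2 = Nat.card
      {q : Quotient (repSetoid A B ω) // kerFun ω q = ⟨N.1, N.2⟩} :=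
    Nat.card_congr (Equiv.ofBijective _ hb)
  rw [this, Nat.card_eq_fintype_card]
end


/-- If, for every finite group `A`, the combination
`Σ_i a_i·|FRep_ω(A, G_i)|` vanishes in `R`, then so does
`Σ_i a_i·|Rep_ω(A, G_i)|` for every finite group `A`. -/
theorem rep_vanish_of_frep_vanish {R : Type*} [Ring R] {s : ℕ}
    (G : Fin s → Type) [∀ i, Group (G i)] [∀ i, Finite (G i)] (a : Fin s → R)
    (ω : (B : Type) → [inst : Group B] → Subgroup (MulAut B))
    (h : ∀ (A : Type) [Group A] [Finite A],
      ∑ i, a i * (Nat.card (Quotient (frepSetoid A (G i) (ω (G i)))) : R) = 0) :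
    ∀ (A : Type) [Group A] [Finite A],
      ∑ i, a i * (Nat.card (Quotient (repSetoid A (G i) (ω (G i)))) : R) = 0 := by
  intro A _ _
  haveI : Fintype {N : Subgroup A // N.Normal} := Fintype.ofFinite _
  calc ∑ i, a i * (Nat.card (Quotient (repSetoid A (G i) (ω (G i)))) : R)
      = ∑ i, a i * ∑ N : {N : Subgroup A // N.Normal},
          (frepCard A (G i) (ω (G i)) N.1 N.2 : R) := by
        refine Finset.sum_congr rfl fun i _ => ?_
        rw [card_rep A (G i) (ω (G i))]
        push_cast
        ring_nf
    _ = ∑ N : {N : Subgroup A // N.Normal},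
          ∑ i, a i * (frepCard A (G i) (ω (G i)) N.1 N.2 : R) := by
        simp_rw [Finset.mul_sum]
        exact Finset.sum_comm
    _ = 0 := by
        refine Finset.sum_eq_zero fun N _ => ?_
        haveI := N.2
        exact h (A ⧸ N.1)
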